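/- Let (π, p) be a mixture with 3 components and define g(t) = J((π_{12,t}, π_{23,t}), (p_{12,t}, p_{23,t})) where π_{12,t} = π_1 + (1−t)π_2, π_{23,t} = tπ_2 + π_3, p_{12,t} = (π_1 p_1 + (1−t)π_2 p_2)/π_{12,t}, p_{23,t} = (tπ_2 p_2 + π_3 p_3)/π_{23,t}, and J is the Jensen–Shannon divergence. Then for all t ∈ [0,1], g(t) ≤ t·g(1) + (1−t)·g(0). -/

import Mathlib

open MeasureTheory Real

noncomputable def entropy (f : ℝ → ℝ) : ℝ := -∫ x, f x * Real.log (f x)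

noncomputable def p12t (w1 w2 : ℝ) (p1 p2 : ℝ → ℝ) (t : ℝ) : ℝ → ℝ :=
  fun x => (w1 * p1 x + (1 - t) * w2 * p2 x) / (w1 + (1 - t) * w2)

noncomputable def p23t (w2 w3 : ℝ) (p2 p3 : ℝ → ℝ) (t : ℝ) : ℝ → ℝ :=
  fun x => (t * w2 * p2 x + w3 * p3 x) / (t * w2 + w3)

/-- The Jensen–Shannon divergence along the two-component perturbation path. -/
noncomputable def g (w1 w2 w3 : ℝ) (p1 p2 p3 : ℝ → ℝ) (t : ℝ) : ℝ :=
  entropy (fun x => w1 * p1 x + w2 * p2 x + w3 * p3 x)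
    - ((w1 + (1 - t) * w2) * entropy (p12t w1 w2 p1 p2 t)
       + (t * w2 + w3) * entropy (p23t w2 w3 p2 p3 t))

/-- Key concavity lemma for weighted entropies along a linear path. -/
lemma weighted_entropy_concave (a1 a0 t : ℝ) (ha1 : 0 < a1) (ha0 : 0 < a0)
    (ht0 : 0 ≤ t) (ht1 : t ≤ 1) (f1 f0 ft : ℝ → ℝ)
    (hf1 : ∀ x, 0 ≤ f1 x) (hf0 : ∀ x, 0 ≤ f0 x)
    (hft : ∀ x, (t * a1 + (1 - t) * a0) * ft x = t * a1 * f1 x + (1 - t) * a0 * f0 x)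
    (int1 : Integrable (fun x => f1 x * Real.log (f1 x)))
    (int0 : Integrable (fun x => f0 x * Real.log (f0 x)))
    (intt : Integrable (fun x => ft x * Real.log (ft x))) :
    t * (a1 * entropy f1) + (1 - t) * (a0 * entropy f0)
      ≤ (t * a1 + (1 - t) * a0) * entropy ft := by
  set A := t * a1 + (1 - t) * a0 with hA
  have ht1' : 0 ≤ 1 - t := by linarith
  have hApos : 0 < A := by
    rw [hA]
    rcases lt_or_eq_of_le ht1 with h | h
    · nlinarith [mul_pos (show (0:ℝ) < 1 - t by linarith) ha0, mul_nonneg ht0 ha1.le]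
    · subst h; simpa using ha1
  have hpt : ∀ x, ft x = (t * a1 / A) * f1 x + ((1 - t) * a0 / A) * f0 x := by
    intro x
    have h := hft x
    field_simp
    linear_combination h
  have hconv : ∀ x, A * (ft x * Real.log (ft x))
      ≤ t * a1 * (f1 x * Real.log (f1 x)) + (1 - t) * a0 * (f0 x * Real.log (f0 x)) := by
    intro x
    have h := Real.convexOn_mul_log.2 (Set.mem_Ici.2 (hf1 x)) (Set.mem_Ici.2 (hf0 x))
      (div_nonneg (mul_nonneg ht0 ha1.le) hApos.le)
      (div_nonneg (mul_nonneg ht1' ha0.le) hApos.le)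
      (by field_simp; exact hA.symm)
    simp only [smul_eq_mul] at h
    rw [← hpt x] at h
    have hle := mul_le_mul_of_nonneg_left h hApos.le
    have heq : A * (t * a1 / A * (f1 x * Real.log (f1 x))
          + (1 - t) * a0 / A * (f0 x * Real.log (f0 x)))
        = t * a1 * (f1 x * Real.log (f1 x)) + (1 - t) * a0 * (f0 x * Real.log (f0 x)) := by
      field_simp
    exact hle.trans heq.le
  have hInt : A * ∫ x, ft x * Real.log (ft x)
      ≤ t * a1 * (∫ x, f1 x * Real.log (f1 x)) + (1 - t) * a0 * (∫ x, f0 x * Real.log (f0 x)) := by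
    rw [← integral_const_mul, ← integral_const_mul, ← integral_const_mul, ← integral_add
      ((int1.const_mul _)) ((int0.const_mul _))]
    exact integral_mono (intt.const_mul _) ((int1.const_mul _).add (int0.const_mul _)) hconv
  simp only [entropy]
  nlinarith [hInt]

/-- Convexity of the Jensen–Shannon divergence along the perturbation path. -/
theorem JS_convex_along_path
    (w1 w2 w3 : ℝ) (h1 : 0 < w1) (h2 : 0 < w2) (h3 : 0 < w3)
    (h1' : w1 ≤ 1) (h2' : w2 ≤ 1) (h3' : w3 ≤ 1)
    (hsum : w1 + w2 + w3 = 1)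
    (p1 p2 p3 : ℝ → ℝ)
    (hp1 : ∀ x, 0 ≤ p1 x) (hp2 : ∀ x, 0 ≤ p2 x) (hp3 : ∀ x, 0 ≤ p3 x)
    (hi1 : ∫ x, p1 x = 1) (hi2 : ∫ x, p2 x = 1) (hi3 : ∫ x, p3 x = 1)
    (hent1 : Integrable (fun x => p1 x * Real.log (p1 x)))
    (hent2 : Integrable (fun x => p2 x * Real.log (p2 x)))
    (hent3 : Integrable (fun x => p3 x * Real.log (p3 x)))
    (hmix : Integrable (fun x => (w1 * p1 x + w2 * p2 x + w3 * p3 x)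
        * Real.log (w1 * p1 x + w2 * p2 x + w3 * p3 x)))
    (hent12 : ∀ s ∈ Set.Icc (0 : ℝ) 1,
      Integrable (fun x => p12t w1 w2 p1 p2 s x * Real.log (p12t w1 w2 p1 p2 s x)))
    (hent23 : ∀ s ∈ Set.Icc (0 : ℝ) 1,
      Integrable (fun x => p23t w2 w3 p2 p3 s x * Real.log (p23t w2 w3 p2 p3 s x)))
    (t : ℝ) (ht : t ∈ Set.Icc (0 : ℝ) 1) :
    g w1 w2 w3 p1 p2 p3 t
      ≤ t * g w1 w2 w3 p1 p2 p3 1 + (1 - t) * g w1 w2 w3 p1 p2 p3 0 := by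
  obtain ⟨ht0, ht1⟩ := ht
  have h12pos : 0 < w1 + w2 := by linarith
  have h23pos : 0 < w2 + w3 := by linarith
  have hmem1 : (1 : ℝ) ∈ Set.Icc (0 : ℝ) 1 := by constructor <;> norm_num
  have hmem0 : (0 : ℝ) ∈ Set.Icc (0 : ℝ) 1 := by constructor <;> norm_num
  have hmemt : t ∈ Set.Icc (0 : ℝ) 1 := ⟨ht0, ht1⟩
  -- nonnegativity of the path densities
  have h12nn : ∀ s ∈ Set.Icc (0 : ℝ) 1, ∀ x, 0 ≤ p12t w1 w2 p1 p2 s x := by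
    intro s hs x
    have hden : 0 ≤ w1 + (1 - s) * w2 := by
      have : 0 ≤ (1 - s) * w2 := mul_nonneg (by linarith [hs.2]) h2.le
      linarith
    exact div_nonneg (by
      have := mul_nonneg (mul_nonneg (by linarith [hs.2] : (0:ℝ) ≤ 1 - s) h2.le) (hp2 x)
      have := mul_nonneg h1.le (hp1 x)
      nlinarith) hden
  have h23nn : ∀ s ∈ Set.Icc (0 : ℝ) 1, ∀ x, 0 ≤ p23t w2 w3 p2 p3 s x := by
    intro s hs x
    have hden : 0 ≤ s * w2 + w3 := by
      have : 0 ≤ s * w2 := mul_nonneg hs.1 h2.le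
      linarith
    exact div_nonneg (by
      have := mul_nonneg (mul_nonneg hs.1 h2.le) (hp2 x)
      have := mul_nonneg h3.le (hp3 x)
      nlinarith) hden
  -- the two key concavity inequalities
  have key12 : t * (w1 * entropy (p12t w1 w2 p1 p2 1))
      + (1 - t) * ((w1 + w2) * entropy (p12t w1 w2 p1 p2 0))
      ≤ (t * w1 + (1 - t) * (w1 + w2)) * entropy (p12t w1 w2 p1 p2 t) := by
    apply weighted_entropy_concave w1 (w1 + w2) t h1 h12pos ht0 ht1
      (p12t w1 w2 p1 p2 1) (p12t w1 w2 p1 p2 0) (p12t w1 w2 p1 p2 t)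
      (h12nn 1 hmem1) (h12nn 0 hmem0) ?_ (hent12 1 hmem1) (hent12 0 hmem0) (hent12 t hmemt)
    intro x
    unfold p12t
    have hdt : w1 + (1 - t) * w2 ≠ 0 := by
      have : 0 ≤ (1 - t) * w2 := mul_nonneg (by linarith) h2.le
      positivity
    field_simp
    ring
  have key23 : t * ((w2 + w3) * entropy (p23t w2 w3 p2 p3 1))
      + (1 - t) * (w3 * entropy (p23t w2 w3 p2 p3 0))
      ≤ (t * (w2 + w3) + (1 - t) * w3) * entropy (p23t w2 w3 p2 p3 t) := by
    apply weighted_entropy_concave (w2 + w3) w3 t h23pos h3 ht0 ht1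
      (p23t w2 w3 p2 p3 1) (p23t w2 w3 p2 p3 0) (p23t w2 w3 p2 p3 t)
      (h23nn 1 hmem1) (h23nn 0 hmem0) ?_ (hent23 1 hmem1) (hent23 0 hmem0) (hent23 t hmemt)
    intro x
    unfold p23t
    have hdt : t * w2 + w3 ≠ 0 := by
      have : 0 ≤ t * w2 := mul_nonneg ht0 h2.le
      positivity
    field_simp
    ring
  simp only [g]
  norm_num
  nlinarith [key12, key23]
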